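/- Let N ≥ 1, P ≥ 1 squarefree with gcd(N,P) = N_P, and P_{6N} = P/gcd(P,6N). For a divisor d of P_{6N}, let \bar d be an inverse of d modulo P/d, and define δ₆(n,m) = 1/2 if n ∣ 6 and gcd(n,m) = 1, and 0 otherwise. Then ∑_{d ∣ P_{6N}} δ₆(P/d, \bar d · N) = 1/2 if gcd(N,P) = 1 and = 0 if gcd(N,P) > 1. -/

import Mathlib

theorem stmt_15 (N P : ℕ) (hN : 1 ≤ N) (hP : 1 ≤ P) (hsq : Squarefree P)
    (inv : ℕ → ℕ)
    (hinv : ∀ d : ℕ, d ∣ P / Nat.gcd P (6 * N) → d * inv d ≡ 1 [MOD P / d]) :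
    (∑ d ∈ (P / Nat.gcd P (6 * N)).divisors,
        (if (P / d) ∣ 6 ∧ Nat.gcd (P / d) (inv d * N) = 1 then (1 : ℝ) / 2 else 0))
      = if Nat.gcd N P = 1 then (1 : ℝ) / 2 else 0 := by
  set G := Nat.gcd P (6 * N) with hG
  set Q := P / G with hQdef
  have hG0 : 0 < G := Nat.gcd_pos_of_pos_left _ hP
  have hGP : G ∣ P := Nat.gcd_dvd_left _ _
  have hQP : Q ∣ P := Nat.div_dvd_of_dvd hGP
  have hQG : Q * G = P := Nat.div_mul_cancel hGP
  have hQ0 : 0 < Q := Nat.div_pos (Nat.le_of_dvd hP hGP) hG0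
  have key : ∀ p : ℕ, p.Prime → p ∣ Q → ¬ p ∣ G := by
    intro p hp hpQ hpG
    exact hp.not_isUnit (hsq p (by rw [← hQG]; exact mul_dvd_mul hpQ hpG))
  by_cases h : Nat.gcd N P = 1
  · rw [if_pos h]
    have hPQ : P / Q = G := Nat.div_div_self hGP (by omega)
    have hcopGN : Nat.Coprime G N := by
      have : Nat.gcd G N ∣ Nat.gcd P N := Nat.dvd_gcd ((Nat.gcd_dvd_left G N).trans hGP) (Nat.gcd_dvd_right G N)
      have h' : Nat.gcd P N = 1 := by rwa [Nat.gcd_comm] at h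
      exact Nat.eq_one_of_dvd_one (h' ▸ this)
    rw [Finset.sum_eq_single Q]
    · rw [if_pos]
      refine ⟨?_, ?_⟩
      · rw [hPQ]
        exact (Nat.Coprime.dvd_of_dvd_mul_right hcopGN (Nat.gcd_dvd_right P (6 * N)))
      · rw [hPQ]
        have h1 : Nat.Coprime G (inv Q) := by
          have := hinv Q dvd_rfl
          rw [hPQ, mul_comm] at this
          exact (Nat.coprime_of_mul_modEq_one Q this).symm
        exact Nat.Coprime.mul_right h1 hcopGN
    · intro d hd hne
      rw [Nat.mem_divisors] at hd
      rw [if_neg]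
      rintro ⟨h6, -⟩
      -- find prime dividing Q / d
      have hdQ : d ∣ Q := hd.1
      obtain ⟨c, hc⟩ := id hdQ
      have hd0 : 0 < d := by
        rcases Nat.eq_zero_or_pos d with h0 | h0
        · rw [h0, zero_mul] at hc; omega
        · exact h0
      have hcd : Q / d = c := by rw [hc]; exact Nat.mul_div_cancel_left c hd0
      have hc1 : c ≠ 1 := by
        intro h1'; rw [h1', mul_one] at hc; exact hne hc.symm
      obtain ⟨p, hp, hpd'⟩ := Nat.exists_prime_and_dvd hc1
      have hpd : p ∣ Q / d := hcd ▸ hpd'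
      have hpQ : p ∣ Q := hpd.trans (Nat.div_dvd_of_dvd hdQ)
      have hPd : P / d = (Q / d) * G := by
        rw [← hQG, mul_comm Q G, Nat.mul_div_assoc G hdQ, mul_comm]
      have hQdPd : Q / d ∣ P / d := by rw [hPd]; exact dvd_mul_right _ _
      have hp6 : p ∣ 6 := (hpd.trans hQdPd).trans h6
      have hpG : p ∣ G := Nat.dvd_gcd (hpQ.trans hQP) (hp6.trans (Dvd.intro N rfl))
      exact key p hp hpQ hpG
    · intro hQn
      exact absurd (Nat.mem_divisors.mpr ⟨dvd_rfl, by omega⟩) hQn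
  · rw [if_neg h]
    apply Finset.sum_eq_zero
    intro d hd
    rw [Nat.mem_divisors] at hd
    rw [if_neg]
    rintro ⟨-, hg⟩
    have hgNP : Nat.gcd N P ≠ 1 := h
    obtain ⟨p, hp, hpd⟩ := Nat.exists_prime_and_dvd hgNP
    have hpN : p ∣ N := hpd.trans (Nat.gcd_dvd_left _ _)
    have hpP : p ∣ P := hpd.trans (Nat.gcd_dvd_right _ _)
    have hpG : p ∣ G := Nat.dvd_gcd hpP (hpN.mul_left 6)
    have hpnd : ¬ p ∣ d := fun hc => key p hp (hc.trans hd.1) hpG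
    have hdP : d ∣ P := hd.1.trans hQP
    have hpPd : p ∣ P / d := by
      have : p ∣ d * (P / d) := by rw [Nat.mul_div_cancel' hdP]; exact hpP
      rcases (hp.dvd_mul.mp this) with h1 | h1
      · exact absurd h1 hpnd
      · exact h1
    have : p ∣ Nat.gcd (P / d) (inv d * N) := Nat.dvd_gcd hpPd (hpN.mul_left _)
    rw [hg] at this
    exact hp.not_dvd_one this
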